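/- Let d ≥ 2, let L be a field of characteristic prime to d containing a primitive d-th root of unity ζ_d, and let a ∈ L be nonzero. If β is a root of z^d − a in an algebraic closure of L, and k is the least positive integer with β^k ∈ L, then k divides d, and the minimal polynomial of β over L is z^k − β^k. -/

import Mathlib

open Polynomial

theorem capelli_orbit_minpoly
    (L : Type*) [Field L] (d : ℕ) (hd : 2 ≤ d) (hchar : (d : L) ≠ 0)
    (ζ : L) (hζ : IsPrimitiveRoot ζ d) (a : L) (ha : a ≠ 0)
    (β : AlgebraicClosure L) (hβ : β ^ d = algebraMap L (AlgebraicClosure L) a)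
    (k : ℕ) (hk : 0 < k) (b : L) (hb : algebraMap L (AlgebraicClosure L) b = β ^ k)
    (hmin : ∀ j : ℕ, 0 < j → j < k →
      ¬ ∃ b' : L, algebraMap L (AlgebraicClosure L) b' = β ^ j) :
    k ∣ d ∧ minpoly L β = X ^ k - C b := by
  set φ := algebraMap L (AlgebraicClosure L) with hφ
  have hd0 : d ≠ 0 := by omega
  have hβ0 : β ≠ 0 := by
    intro h
    apply ha
    have : φ a = 0 := by rw [← hβ, h, zero_pow hd0]
    exact (_root_.map_eq_zero φ).mp this
  have hb0 : b ≠ 0 := by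
    intro h
    apply hβ0
    have : β ^ k = 0 := by rw [← hb, h, map_zero]
    exact pow_eq_zero_iff hk.ne' |>.mp this
  -- key divisibility lemma
  have key : ∀ j : ℕ, (∃ b' : L, φ b' = β ^ j) → k ∣ j := by
    intro j ⟨b', hb'⟩
    rcases Nat.eq_zero_or_pos (j % k) with h0 | hpos
    · exact Nat.dvd_of_mod_eq_zero h0
    · exfalso
      apply hmin (j % k) hpos (Nat.mod_lt _ hk)
      refine ⟨b' / b ^ (j / k), ?_⟩
      have hbk : φ (b ^ (j / k)) ≠ 0 := by
        simp [_root_.map_eq_zero, hb0]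
      rw [map_div₀, hb', map_pow, hb, ← pow_mul,
        div_eq_iff (pow_ne_zero _ hβ0), ← pow_add]
      congr 1
      exact (Nat.mod_add_div j k).symm
  have hkd : k ∣ d := key d ⟨a, hβ.symm⟩
  -- β is integral
  have hint : IsIntegral L β := by
    refine ⟨X ^ d - C a, monic_X_pow_sub_C a hd0, ?_⟩
    simp [hβ]
    exact sub_self _
  set p := minpoly L β with hp
  set m := p.natDegree with hm
  have hm0 : 0 < m := minpoly.natDegree_pos hint
  have hpmonic : p.Monic := minpoly.monic hint
  -- p divides X^k - C b
  have hdvd : p ∣ X ^ k - C b := by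
    apply minpoly.dvd
    simp [hb]
    rw [← hb]; exact sub_self _
  have hXk : (X ^ k - C b : L[X]).Monic := monic_X_pow_sub_C b hk.ne'
  have hmk : m ≤ k := by
    have := natDegree_le_of_dvd hdvd hXk.ne_zero
    rwa [natDegree_X_pow_sub_C] at this
  -- study roots of p in closure
  set q := p.map φ with hq
  have hqmonic : q.Monic := hpmonic.map φ
  have hsplit : q.Splits :=
    IsAlgClosed.splits q
  have hndq : q.natDegree = m := by rw [hq, hpmonic.natDegree_map]
  have hcard : q.roots.card = m := by
    rw [(splits_iff_card_roots).mp hsplit, hndq]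
  have hζ' : IsPrimitiveRoot (φ ζ) d := hζ.map_of_injective φ.injective
  have hroot : ∀ r ∈ q.roots, ∃ c : L, r = φ c * β := by
    intro r hr
    have hr0 : q.eval r = 0 := (isRoot_of_mem_roots hr)
    have hdvd2 : p ∣ X ^ d - C a := by
      apply minpoly.dvd
      simp [hβ]
      exact sub_self _
    have hrd : r ^ d = φ a := by
      have : ((X ^ d - C a : L[X]).map φ).eval r = 0 := by
        obtain ⟨c, hc⟩ := hdvd2
        rw [hc, Polynomial.map_mul, eval_mul, hr0, zero_mul]
      simpa [sub_eq_zero] using this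
    have hratio : (r / β) ^ d = 1 := by
      rw [div_pow, hrd, ← hβ, div_self (pow_ne_zero _ hβ0)]
    haveI : NeZero d := ⟨hd0⟩
    obtain ⟨i, _, hi⟩ := hζ'.eq_pow_of_pow_eq_one hratio
    exact ⟨ζ ^ i, by rw [map_pow, hi, div_mul_cancel₀ _ hβ0]⟩
  -- product of roots
  have prodlem : ∀ s : Multiset (AlgebraicClosure L),
      (∀ r ∈ s, ∃ c : L, r = φ c * β) →
      ∃ u : L, s.prod = φ u * β ^ s.card := by
    intro s
    induction s using Multiset.induction with
    | empty => intro _; exact ⟨1, by simp⟩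
    | cons r t ih =>
      intro h
      obtain ⟨c, hc⟩ := h r (Multiset.mem_cons_self r t)
      obtain ⟨u, hu⟩ := ih (fun x hx => h x (Multiset.mem_cons_of_mem hx))
      refine ⟨c * u, ?_⟩
      rw [Multiset.prod_cons, hc, hu, Multiset.card_cons, map_mul]
      ring
  obtain ⟨u, hu⟩ := prodlem q.roots hroot
  have hcoeff : φ (p.coeff 0) = (-1) ^ m * (φ u * β ^ m) := by
    have h1 := hsplit.coeff_zero_eq_prod_roots_of_monic hqmonic
    rw [hu, hcard, hndq] at h1
    rw [← h1, hq, coeff_map]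
  have hc0ne : p.coeff 0 ≠ 0 := minpoly.coeff_zero_ne_zero hint hβ0
  have hu0 : u ≠ 0 := by
    intro h
    rw [h, map_zero, zero_mul, mul_zero] at hcoeff
    exact hc0ne (φ.injective (by rw [hcoeff, map_zero]))
  -- β ^ m ∈ L
  have hφu : φ u ≠ 0 := by simp [_root_.map_eq_zero, hu0]
  have hbm : ∃ b' : L, φ b' = β ^ m := by
    refine ⟨(-1) ^ m * p.coeff 0 / u, ?_⟩
    have h11 : ((-1 : AlgebraicClosure L)) ^ m * (-1) ^ m = 1 := by
      rw [← mul_pow]; norm_num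
    rw [map_div₀, map_mul, hcoeff, map_pow, map_neg, map_one, ← mul_assoc, h11,
      one_mul, mul_comm (φ u), mul_div_assoc, div_self hφu, mul_one]
  have hkm : k ∣ m := key m hbm
  have hmeq : m = k := le_antisymm hmk (Nat.le_of_dvd hm0 hkm)
  refine ⟨hkd, ?_⟩
  -- p = X^k - C b
  obtain ⟨c, hc⟩ := hdvd
  have hc0 : c ≠ 0 := by
    intro h; rw [h, mul_zero] at hc; exact hXk.ne_zero hc
  have hcdeg : c.natDegree = 0 := by
    have h2 := congrArg natDegree hc
    rw [natDegree_X_pow_sub_C, natDegree_mul hpmonic.ne_zero hc0, ← hm] at h2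
    omega
  have hcmonic : c.Monic := by
    have : (X ^ k - C b : L[X]).leadingCoeff = p.leadingCoeff * c.leadingCoeff := by
      rw [hc, leadingCoeff_mul]
    rw [hXk.leadingCoeff, hpmonic.leadingCoeff, one_mul] at this
    exact this.symm
  rw [hc, eq_one_of_monic_natDegree_zero hcmonic hcdeg, mul_one]
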